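/- arXiv:2303.06924 — 7 statements merged into one kernel-verified Lean document; each statement's English description precedes it below -/
import Mathlib

section
/- The Hessian matrix of the modified energy function η(U) = (1/2)h(v₁²+v₂²) + (1/2)gh² + ghb + γgb², viewed as a function of the conservative variables U = (h, hv₁, hv₂, b), equals (1/h) times the 4×4 matrix with rows (gh+v₁²+v₂², -v₁, -v₂, gh), (-v₁, 1, 0, 0), (-v₂, 0, 1, 0), (gh, 0, 0, 2γgh), and this matrix is positive definite whenever h > 0, g > 0, and γ > 1/2. -/
open Matrix

noncomputable abbrev energyPr (i : Fin 4) : (Fin 4 → ℝ) →L[ℝ] ℝ :=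
  ContinuousLinearMap.proj i

set_option maxHeartbeats 1000000 in
lemma energy_hessian_entries (g γ h v₁ v₂ b : ℝ) (hh : 0 < h) (i j : Fin 4) :
    (fderiv ℝ (fun x : Fin 4 → ℝ =>
      (g * x 0 + g * x 3 - (x 1 * x 1 + x 2 * x 2) * (2 * (x 0 * x 0))⁻¹) • energyPr 0
        + (x 1 * (x 0)⁻¹) • energyPr 1 + (x 2 * (x 0)⁻¹) • energyPr 2
        + (g * x 0 + 2 * γ * g * x 3) • energyPr 3) ![h, h * v₁, h * v₂, b])
      (Pi.single i 1) (Pi.single j 1) =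
    ((1 / h) • !![g * h + v₁^2 + v₂^2, -v₁, -v₂, g * h;
                   -v₁, 1, 0, 0;
                   -v₂, 0, 1, 0;
                   g * h, 0, 0, 2 * γ * g * h]) i j := by
  set U : Fin 4 → ℝ := ![h, h * v₁, h * v₂, b] with hU
  have hU0 : U 0 = h := rfl
  have hU1 : U 1 = h * v₁ := rfl
  have hU2 : U 2 = h * v₂ := rfl
  have hU3 : U 3 = b := rfl
  have hne : U 0 ≠ 0 := by rw [hU0]; exact ne_of_gt hh
  have p0 : HasFDerivAt (fun u : Fin 4 → ℝ => u 0) (energyPr 0) U := hasFDerivAt_apply 0 U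
  have p1 : HasFDerivAt (fun u : Fin 4 → ℝ => u 1) (energyPr 1) U := hasFDerivAt_apply 1 U
  have p2 : HasFDerivAt (fun u : Fin 4 → ℝ => u 2) (energyPr 2) U := hasFDerivAt_apply 2 U
  have p3 : HasFDerivAt (fun u : Fin 4 → ℝ => u 3) (energyPr 3) U := hasFDerivAt_apply 3 U
  have hne2 : (2 : ℝ) * (U 0 * U 0) ≠ 0 := by rw [hU0]; positivity
  have hq : HasFDerivAt (fun u : Fin 4 → ℝ => (2 * (u 0 * u 0))⁻¹)
      ((-((2 * (U 0 * U 0)) ^ 2)⁻¹) • ((2:ℝ) • (U 0 • energyPr 0 + U 0 • energyPr 0))) U :=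
    (hasDerivAt_inv hne2).comp_hasFDerivAt U ((p0.mul p0).const_mul 2)
  have hinv : HasFDerivAt (fun u : Fin 4 → ℝ => (u 0)⁻¹)
      ((-((U 0) ^ 2)⁻¹) • energyPr 0) U :=
    (hasDerivAt_inv hne).comp_hasFDerivAt U p0
  have hc0 := ((p0.const_mul g).add (p3.const_mul g)).sub
      (((p1.mul p1).add (p2.mul p2)).mul hq)
  have hc1 := p1.mul hinv
  have hc2 := p2.mul hinv
  have hc3 := (p0.const_mul g).add (p3.const_mul (2*γ*g))
  have hD2 : HasFDerivAt (fun x : Fin 4 → ℝ =>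
      (g * x 0 + g * x 3 - (x 1 * x 1 + x 2 * x 2) * (2 * (x 0 * x 0))⁻¹) • energyPr 0
        + (x 1 * (x 0)⁻¹) • energyPr 1 + (x 2 * (x 0)⁻¹) • energyPr 2
        + (g * x 0 + 2 * γ * g * x 3) • energyPr 3) _ U :=
    (((hc0.smul_const (energyPr 0)).add (hc1.smul_const (energyPr 1))).add
      (hc2.smul_const (energyPr 2))).add (hc3.smul_const (energyPr 3))
  rw [hD2.fderiv]
  have hhne : h ≠ 0 := ne_of_gt hh
  clear hD2 hc0 hc1 hc2 hc3 hq hinv p0 p1 p2 p3 hne hne2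
  fin_cases i <;> fin_cases j <;>
    · simp only [ContinuousLinearMap.add_apply, ContinuousLinearMap.sub_apply,
        ContinuousLinearMap.smul_apply, ContinuousLinearMap.coe_smul', Pi.smul_apply,
        ContinuousLinearMap.smulRight_apply, ContinuousLinearMap.proj_apply,
        smul_eq_mul, Pi.single_apply, hU0, hU1, hU2, hU3]
      try simp [Matrix.smul_apply, Matrix.cons_val', Matrix.cons_val_zero,
        Matrix.cons_val_one, Matrix.head_cons, Matrix.empty_val', Matrix.cons_val_fin_one,
        Matrix.head_fin_const, Matrix.vecHead, Matrix.vecTail]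
      try simp only [hU0, hU1, hU2, hU3]
      try field_simp
      try ring

set_option maxHeartbeats 1000000 in
lemma energy_hessian_posdef (g γ h v₁ v₂ b : ℝ) (hh : 0 < h) (hg : 0 < g)
    (hγ : γ > 1/2) :
    ((1 / h) • !![g * h + v₁^2 + v₂^2, -v₁, -v₂, g * h;
                   -v₁, 1, 0, 0;
                   -v₂, 0, 1, 0;
                   g * h, 0, 0, 2 * γ * g * h] : Matrix (Fin 4) (Fin 4) ℝ).PosDef := by
  refine Matrix.posDef_iff_dotProduct_mulVec.mpr ⟨?_, ?_⟩
  · show _ᴴ = _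
    ext i j
    fin_cases i <;> fin_cases j <;> simp [Matrix.conjTranspose_apply, Matrix.vecHead, Matrix.vecTail]
  · intro x hx
    have key : dotProduct (star x)
        (((1 / h) • !![g * h + v₁^2 + v₂^2, -v₁, -v₂, g * h;
                   -v₁, 1, 0, 0;
                   -v₂, 0, 1, 0;
                   g * h, 0, 0, 2 * γ * g * h] : Matrix (Fin 4) (Fin 4) ℝ) *ᵥ x) =
        (1/h) * ((x 1 - v₁ * x 0)^2 + (x 2 - v₂ * x 0)^2
          + g * h * (x 0 + x 3)^2 + (2*γ - 1) * (g*h) * (x 3)^2) := by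
      simp [Matrix.mulVec, dotProduct, Fin.sum_univ_four, Matrix.smul_apply, Matrix.vecHead, Matrix.vecTail]
      ring
    rw [key]
    have h4 : x 0 ≠ 0 ∨ x 1 ≠ 0 ∨ x 2 ≠ 0 ∨ x 3 ≠ 0 := by
      by_contra hc
      push_neg at hc
      exact hx (funext fun i => by
        fin_cases i <;> simp [hc.1, hc.2.1, hc.2.2.1, hc.2.2.2])
    have hA := sq_nonneg (x 1 - v₁ * x 0)
    have hB := sq_nonneg (x 2 - v₂ * x 0)
    have hC : (0:ℝ) ≤ g * h * (x 0 + x 3)^2 := by positivity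
    have hDnn : (0:ℝ) ≤ (2*γ - 1) * (g*h) * (x 3)^2 :=
      mul_nonneg (mul_nonneg (by linarith) (by positivity)) (sq_nonneg _)
    have hS : 0 < (x 1 - v₁ * x 0)^2 + (x 2 - v₂ * x 0)^2
        + g * h * (x 0 + x 3)^2 + (2*γ - 1) * (g*h) * (x 3)^2 := by
      by_cases h3 : x 3 = 0
      · by_cases h0 : x 0 = 0
        · rcases h4 with hzz|hzz|hzz|hzz
          · exact absurd h0 hzz
          · have : 0 < (x 1 - v₁ * x 0)^2 := by
              rw [h0, mul_zero, sub_zero]; exact pow_two_pos_of_ne_zero hzz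
            linarith
          · have : 0 < (x 2 - v₂ * x 0)^2 := by
              rw [h0, mul_zero, sub_zero]; exact pow_two_pos_of_ne_zero hzz
            linarith
          · exact absurd h3 hzz
        · have : 0 < g * h * (x 0 + x 3)^2 := by
            rw [h3, add_zero]
            exact mul_pos (mul_pos hg hh) (pow_two_pos_of_ne_zero h0)
          linarith
      · have : 0 < (2*γ - 1) * (g*h) * (x 3)^2 :=
          mul_pos (mul_pos (by linarith) (mul_pos hg hh)) (pow_two_pos_of_ne_zero h3)
        linarith
    exact mul_pos (by positivity) hS

set_option maxHeartbeats 1000000 in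
/-- The Hessian of the modified energy η(U) with respect to the conservative
variables U = (h, hv₁, hv₂, b) equals (1/h) times the explicit matrix below,
which is positive definite when h > 0, g > 0 and γ > 1/2. -/
theorem energy_hessian (g γ h v₁ v₂ b : ℝ) (hh : 0 < h) (hg : 0 < g) :
    let η : (Fin 4 → ℝ) → ℝ := fun u =>
      ((u 1)^2 + (u 2)^2) / (2 * u 0) + (1/2) * g * (u 0)^2 + g * (u 0) * (u 3)
        + γ * g * (u 3)^2
    let U : Fin 4 → ℝ := ![h, h * v₁, h * v₂, b]
    let M : Matrix (Fin 4) (Fin 4) ℝ :=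
      (1 / h) • !![g * h + v₁^2 + v₂^2, -v₁, -v₂, g * h;
                   -v₁, 1, 0, 0;
                   -v₂, 0, 1, 0;
                   g * h, 0, 0, 2 * γ * g * h]
    (∀ i j, (iteratedFDeriv ℝ 2 η U) ![Pi.single i 1, Pi.single j 1] = M i j) ∧
    (γ > 1/2 → M.PosDef) := by
  intro η U M
  have hη : η = (fun u : Fin 4 → ℝ =>
      (u 1 * u 1 + u 2 * u 2) * (2 * u 0)⁻¹ + 1/2 * g * (u 0 * u 0)
        + g * u 0 * u 3 + γ * g * (u 3 * u 3)) := by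
    funext u
    show ((u 1)^2 + (u 2)^2) / (2 * u 0) + (1/2) * g * (u 0)^2 + g * (u 0) * (u 3)
        + γ * g * (u 3)^2 = _
    ring
  have hU0 : U 0 = h := rfl
  have hne : U 0 ≠ 0 := by rw [hU0]; exact ne_of_gt hh
  -- first derivative, valid whenever x 0 ≠ 0
  have hD : ∀ x : Fin 4 → ℝ, x 0 ≠ 0 → HasFDerivAt (fun u : Fin 4 → ℝ =>
      (u 1 * u 1 + u 2 * u 2) * (2 * u 0)⁻¹ + 1/2 * g * (u 0 * u 0)
        + g * u 0 * u 3 + γ * g * (u 3 * u 3))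
      ((g * x 0 + g * x 3 - (x 1 * x 1 + x 2 * x 2) * (2 * (x 0 * x 0))⁻¹) • energyPr 0
        + (x 1 * (x 0)⁻¹) • energyPr 1 + (x 2 * (x 0)⁻¹) • energyPr 2
        + (g * x 0 + 2 * γ * g * x 3) • energyPr 3) x := by
    intro x hx
    have p0 : HasFDerivAt (fun u : Fin 4 → ℝ => u 0) (energyPr 0) x := hasFDerivAt_apply 0 x
    have p1 : HasFDerivAt (fun u : Fin 4 → ℝ => u 1) (energyPr 1) x := hasFDerivAt_apply 1 x
    have p2 : HasFDerivAt (fun u : Fin 4 → ℝ => u 2) (energyPr 2) x := hasFDerivAt_apply 2 x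
    have p3 : HasFDerivAt (fun u : Fin 4 → ℝ => u 3) (energyPr 3) x := hasFDerivAt_apply 3 x
    have hx2 : (2 : ℝ) * x 0 ≠ 0 := mul_ne_zero two_ne_zero hx
    have hinv : HasFDerivAt (fun u : Fin 4 → ℝ => (2 * u 0)⁻¹)
        ((-((2 * x 0) ^ 2)⁻¹) • ((2:ℝ) • energyPr 0)) x :=
      (hasDerivAt_inv hx2).comp_hasFDerivAt x (p0.const_mul 2)
    have hbig : HasFDerivAt (fun u : Fin 4 → ℝ =>
        (u 1 * u 1 + u 2 * u 2) * (2 * u 0)⁻¹ + 1/2 * g * (u 0 * u 0)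
          + g * u 0 * u 3 + γ * g * (u 3 * u 3)) _ x := ((((p1.mul p1).add (p2.mul p2)).mul hinv).add
        ((p0.mul p0).const_mul (1/2*g))).add ((p0.const_mul g).mul p3) |>.add
        ((p3.mul p3).const_mul (γ*g))
    refine hbig.congr_fderiv ?_
    ext w
    simp only [ContinuousLinearMap.add_apply, ContinuousLinearMap.sub_apply,
      ContinuousLinearMap.smul_apply, ContinuousLinearMap.coe_smul', Pi.smul_apply,
      ContinuousLinearMap.proj_apply, smul_eq_mul, Pi.mul_apply, Pi.add_apply]
    ring
  have hfd1 : fderiv ℝ (fun u : Fin 4 → ℝ =>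
      (u 1 * u 1 + u 2 * u 2) * (2 * u 0)⁻¹ + 1/2 * g * (u 0 * u 0)
        + g * u 0 * u 3 + γ * g * (u 3 * u 3)) =ᶠ[nhds U] (fun x : Fin 4 → ℝ =>
      (g * x 0 + g * x 3 - (x 1 * x 1 + x 2 * x 2) * (2 * (x 0 * x 0))⁻¹) • energyPr 0
        + (x 1 * (x 0)⁻¹) • energyPr 1 + (x 2 * (x 0)⁻¹) • energyPr 2
        + (g * x 0 + 2 * γ * g * x 3) • energyPr 3) := by
    have h0 : ∀ᶠ x : Fin 4 → ℝ in nhds U, x 0 ≠ 0 :=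
      (continuous_apply (0 : Fin 4)).continuousAt.eventually_ne hne
    filter_upwards [h0] with x hx
    exact (hD x hx).fderiv
  constructor
  · intro i j
    rw [hη, iteratedFDeriv_two_apply]
    simp only [Matrix.cons_val_zero, Matrix.cons_val_one, Matrix.head_cons]
    rw [Filter.EventuallyEq.fderiv_eq hfd1]
    exact energy_hessian_entries g γ h v₁ v₂ b hh i j
  · intro hγ
    exact energy_hessian_posdef g γ h v₁ v₂ b hh hg hγ
end

section
/- The 4×4 Hessian matrix (1/h)·[[gh+v₁²+v₂², -v₁, -v₂, gh], [-v₁, 1, 0, 0], [-v₂, 0, 1, 0], [gh, 0, 0, 2γgh]] is invertible if and only if γ ≠ 1/2, assuming h > 0 and g > 0. -/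
open Matrix

lemma hessian_det_aux (g γ h v₁ v₂ : ℝ) :
    (!![g * h + v₁^2 + v₂^2, -v₁, -v₂, g * h;
        -v₁, 1, 0, 0;
        -v₂, 0, 1, 0;
        g * h, 0, 0, 2 * γ * g * h] : Matrix (Fin 4) (Fin 4) ℝ).det
      = g^2 * h^2 * (2*γ - 1) := by
  simp [Matrix.det_succ_row_zero, Fin.sum_univ_succ, Fin.succAbove,
    show (Fin.castSucc 2 : Fin 4) = 2 from rfl]
  ring

/-- The Hessian matrix of the modified energy is invertible iff γ ≠ 1/2. -/
theorem hessian_invertible_iff (g γ h v₁ v₂ : ℝ) (hh : 0 < h) (hg : 0 < g) :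
    let M : Matrix (Fin 4) (Fin 4) ℝ :=
      (1 / h) • !![g * h + v₁^2 + v₂^2, -v₁, -v₂, g * h;
                   -v₁, 1, 0, 0;
                   -v₂, 0, 1, 0;
                   g * h, 0, 0, 2 * γ * g * h]
    IsUnit M ↔ γ ≠ 1/2 := by
  intro M
  rw [show IsUnit M ↔ IsUnit M.det from Matrix.isUnit_iff_isUnit_det M]
  have hdet : M.det = (1/h)^4 * (g^2 * h^2 * (2*γ - 1)) := by
    simp only [M, det_smul, hessian_det_aux]
    norm_num
  rw [hdet, isUnit_iff_ne_zero]
  have hh4 : (1/h)^4 * (g^2 * h^2) ≠ 0 := by positivity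
  constructor
  · intro hne hγ
    apply hne
    rw [hγ]; ring
  · intro hγ hz
    apply hγ
    have : (2*γ - 1) = 0 := by
      by_contra hc
      rw [show (1/h)^4 * (g^2 * h^2 * (2*γ-1)) = ((1/h)^4 * (g^2*h^2)) * (2*γ-1) by ring] at hz
      exact mul_ne_zero hh4 hc hz
    linarith
end

section
/- For the reformulated shallow water system, the consistency defect of the energy pair satisfies ∂q_ℓ/∂U - Vᵀ ∂F_ℓ/∂U = (0, 0, 0, ghv_ℓ) for ℓ = 1, 2, where q_ℓ(U) = (1/2)hv_ℓ(v₁²+v₂²) + gh²v_ℓ + ghbv_ℓ, F₁ = (hv₁, hv₁² + (g/2)h², hv₁v₂, 0), F₂ = (hv₂, hv₁v₂, hv₂² + (g/2)h², 0), and V = (g(h+b) - (v₁²+v₂²)/2, v₁, v₂, gh + 2γgb). -/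
set_option maxHeartbeats 2000000 in
/-- Consistency defect of the energy pair: ∂q_ℓ/∂U − Vᵀ ∂F_ℓ/∂U = (0,0,0,ghv_ℓ)
for ℓ = 1, 2, all derivatives taken with respect to the conservative variables
U = (h, hv₁, hv₂, b). -/
theorem energy_pair_defect (g γ h v₁ v₂ b : ℝ) (hh : 0 < h) :
    let q₁ : (Fin 4 → ℝ) → ℝ := fun u =>
      (1/2) * (u 1) * (((u 1)^2 + (u 2)^2) / (u 0)^2) + g * (u 0) * (u 1)
        + g * (u 3) * (u 1)
    let q₂ : (Fin 4 → ℝ) → ℝ := fun u =>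
      (1/2) * (u 2) * (((u 1)^2 + (u 2)^2) / (u 0)^2) + g * (u 0) * (u 2)
        + g * (u 3) * (u 2)
    let F₁ : (Fin 4 → ℝ) → Fin 4 → ℝ := fun u =>
      ![u 1, (u 1)^2 / u 0 + g / 2 * (u 0)^2, u 1 * u 2 / u 0, 0]
    let F₂ : (Fin 4 → ℝ) → Fin 4 → ℝ := fun u =>
      ![u 2, u 1 * u 2 / u 0, (u 2)^2 / u 0 + g / 2 * (u 0)^2, 0]
    let U : Fin 4 → ℝ := ![h, h * v₁, h * v₂, b]
    let V : Fin 4 → ℝ :=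
      ![g * (h + b) - (v₁^2 + v₂^2) / 2, v₁, v₂, g * h + 2 * γ * g * b]
    (∀ j, fderiv ℝ q₁ U (Pi.single j 1)
        - ∑ i, V i * fderiv ℝ (fun u => F₁ u i) U (Pi.single j 1)
      = (![0, 0, 0, g * h * v₁] : Fin 4 → ℝ) j) ∧
    (∀ j, fderiv ℝ q₂ U (Pi.single j 1)
        - ∑ i, V i * fderiv ℝ (fun u => F₂ u i) U (Pi.single j 1)
      = (![0, 0, 0, g * h * v₂] : Fin 4 → ℝ) j) := by
  intro q₁ q₂ F₁ F₂ U V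
  have hU0 : U 0 = h := rfl
  have h0 : U 0 ≠ 0 := by rw [hU0]; exact ne_of_gt hh
  have hp : ∀ i : Fin 4, HasFDerivAt (fun u : Fin 4 → ℝ => u i)
      (ContinuousLinearMap.proj (R := ℝ) (φ := fun _ : Fin 4 => ℝ) i) U :=
    fun i => (ContinuousLinearMap.proj (R := ℝ) (φ := fun _ : Fin 4 => ℝ) i).hasFDerivAt
  have hinv1 : HasFDerivAt (fun u : Fin 4 → ℝ => (u 0)⁻¹) _ U :=
    (hasDerivAt_inv h0).comp_hasFDerivAt U (hp 0)
  have hinv2 : HasFDerivAt (fun u : Fin 4 → ℝ => (u 0 * u 0)⁻¹) _ U :=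
    (hasDerivAt_inv (mul_ne_zero h0 h0)).comp_hasFDerivAt U ((hp 0).mul (hp 0))
  constructor
  -- Branch L
  have eqQ : (fun u : Fin 4 → ℝ =>
      (1/2) * (u 1) * (((u 1)^2 + (u 2)^2) / (u 0)^2) + g * (u 0) * (u 1)
        + g * (u 3) * (u 1))
      = (fun u : Fin 4 → ℝ =>
      1/2 * u 1 * ((u 1 * u 1 + u 2 * u 2) * (u 0 * u 0)⁻¹) + g * u 0 * u 1
        + g * u 3 * u 1) := by
    funext u; ring
  have HQ : HasFDerivAt (fun u : Fin 4 → ℝ =>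
      1/2 * u 1 * ((u 1 * u 1 + u 2 * u 2) * (u 0 * u 0)⁻¹) + g * u 0 * u 1
        + g * u 3 * u 1) _ U :=
    ((((hp 1).const_mul (1/2)).mul
        ((((hp 1).mul (hp 1)).add ((hp 2).mul (hp 2))).mul hinv2)).add
      (((hp 0).const_mul g).mul (hp 1))).add (((hp 3).const_mul g).mul (hp 1))
  rw [← eqQ] at HQ
  have eqD : (fun u : Fin 4 → ℝ => (u 1)^2 / u 0 + g / 2 * (u 0)^2)
      = (fun u : Fin 4 → ℝ => u 1 * u 1 * (u 0)⁻¹ + g / 2 * (u 0 * u 0)) := by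
    funext u; ring
  have HD : HasFDerivAt (fun u : Fin 4 → ℝ => u 1 * u 1 * (u 0)⁻¹ + g / 2 * (u 0 * u 0)) _ U :=
    (((hp 1).mul (hp 1)).mul hinv1).add (((hp 0).mul (hp 0)).const_mul (g / 2))
  rw [← eqD] at HD
  have eqC : (fun u : Fin 4 → ℝ => u 1 * u 2 / u 0)
      = (fun u : Fin 4 → ℝ => u 1 * u 2 * (u 0)⁻¹) := by
    funext u; ring
  have HC : HasFDerivAt (fun u : Fin 4 → ℝ => u 1 * u 2 * (u 0)⁻¹) _ U :=
    ((hp 1).mul (hp 2)).mul hinv1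
  rw [← eqC] at HC
  intro j
  simp only [q₁, F₁, Fin.sum_univ_four, Matrix.cons_val_zero, Matrix.cons_val_one,
    Matrix.head_cons, Matrix.cons_val_two, Matrix.tail_cons, Matrix.cons_val_three,
    fderiv_const, Pi.zero_apply, ContinuousLinearMap.zero_apply]
  rw [HQ.fderiv, HD.fderiv, HC.fderiv, (hp 1).fderiv]
  fin_cases j <;>
    simp [ContinuousLinearMap.add_apply, ContinuousLinearMap.coe_smul', Pi.smul_apply,
      ContinuousLinearMap.proj_apply, ContinuousLinearMap.smul_apply, U, V, hU0,
      Pi.single_apply, Matrix.cons_val_zero, Matrix.cons_val_one, Matrix.head_cons,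
      Matrix.cons_val_two, Matrix.tail_cons, Matrix.cons_val_three, smul_eq_mul] <;>
    first
      | rfl
      | (field_simp; ring)
      | ring
  -- Branch L
  have eqQ : (fun u : Fin 4 → ℝ =>
      (1/2) * (u 2) * (((u 1)^2 + (u 2)^2) / (u 0)^2) + g * (u 0) * (u 2)
        + g * (u 3) * (u 2))
      = (fun u : Fin 4 → ℝ =>
      1/2 * u 2 * ((u 1 * u 1 + u 2 * u 2) * (u 0 * u 0)⁻¹) + g * u 0 * u 2
        + g * u 3 * u 2) := by
    funext u; ring
  have HQ : HasFDerivAt (fun u : Fin 4 → ℝ =>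
      1/2 * u 2 * ((u 1 * u 1 + u 2 * u 2) * (u 0 * u 0)⁻¹) + g * u 0 * u 2
        + g * u 3 * u 2) _ U :=
    ((((hp 2).const_mul (1/2)).mul
        ((((hp 1).mul (hp 1)).add ((hp 2).mul (hp 2))).mul hinv2)).add
      (((hp 0).const_mul g).mul (hp 2))).add (((hp 3).const_mul g).mul (hp 2))
  rw [← eqQ] at HQ
  have eqD : (fun u : Fin 4 → ℝ => (u 2)^2 / u 0 + g / 2 * (u 0)^2)
      = (fun u : Fin 4 → ℝ => u 2 * u 2 * (u 0)⁻¹ + g / 2 * (u 0 * u 0)) := by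
    funext u; ring
  have HD : HasFDerivAt (fun u : Fin 4 → ℝ => u 2 * u 2 * (u 0)⁻¹ + g / 2 * (u 0 * u 0)) _ U :=
    (((hp 2).mul (hp 2)).mul hinv1).add (((hp 0).mul (hp 0)).const_mul (g / 2))
  rw [← eqD] at HD
  have eqC : (fun u : Fin 4 → ℝ => u 1 * u 2 / u 0)
      = (fun u : Fin 4 → ℝ => u 1 * u 2 * (u 0)⁻¹) := by
    funext u; ring
  have HC : HasFDerivAt (fun u : Fin 4 → ℝ => u 1 * u 2 * (u 0)⁻¹) _ U :=
    ((hp 1).mul (hp 2)).mul hinv1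
  rw [← eqC] at HC
  intro j
  simp only [q₂, F₂, Fin.sum_univ_four, Matrix.cons_val_zero, Matrix.cons_val_one,
    Matrix.head_cons, Matrix.cons_val_two, Matrix.tail_cons, Matrix.cons_val_three,
    fderiv_const, Pi.zero_apply, ContinuousLinearMap.zero_apply]
  rw [HQ.fderiv, HD.fderiv, HC.fderiv, (hp 2).fderiv]
  fin_cases j <;>
    simp [ContinuousLinearMap.add_apply, ContinuousLinearMap.coe_smul', Pi.smul_apply,
      ContinuousLinearMap.proj_apply, ContinuousLinearMap.smul_apply, U, V, hU0,
      Pi.single_apply, Matrix.cons_val_zero, Matrix.cons_val_one, Matrix.head_cons,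
      Matrix.cons_val_two, Matrix.tail_cons, Matrix.cons_val_three, smul_eq_mul] <;>
    first
      | rfl
      | (field_simp; ring)
      | ring
end

section
/- The temporal two-point flux Ũ = (⟨h⟩, ⟨h⟩⟨v₁⟩, ⟨h⟩⟨v₂⟩, ⟨b⟩) satisfies the energy-conservation condition (V_R - V_L)ᵀ Ũ = φ_R - φ_L, where V = (g(h+b) - (v₁²+v₂²)/2, v₁, v₂, gh + 2γgb) and φ = (1/2)gh² + ghb + γgb². -/
open Matrix

/-- The temporal two-point EC flux Ũ = (⟨h⟩, ⟨h⟩⟨v₁⟩, ⟨h⟩⟨v₂⟩, ⟨b⟩) satisfies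
(V_R − V_L)ᵀ Ũ = φ_R − φ_L. -/
theorem temporal_EC_flux (g γ hL hR v₁L v₁R v₂L v₂R bL bR : ℝ)
    (hhL : 0 < hL) (hhR : 0 < hR) :
    let V : ℝ → ℝ → ℝ → ℝ → Fin 4 → ℝ := fun h v₁ v₂ b =>
      ![g * (h + b) - (v₁^2 + v₂^2) / 2, v₁, v₂, g * h + 2 * γ * g * b]
    let φ : ℝ → ℝ → ℝ := fun h b => (1/2) * g * h^2 + g * h * b + γ * g * b^2
    let Ut : Fin 4 → ℝ :=
      ![(hL + hR) / 2, (hL + hR) / 2 * ((v₁L + v₁R) / 2),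
        (hL + hR) / 2 * ((v₂L + v₂R) / 2), (bL + bR) / 2]
    (V hR v₁R v₂R bR - V hL v₁L v₂L bL) ⬝ᵥ Ut = φ hR bR - φ hL bL := by
  simp only [dotProduct, Fin.sum_univ_four, Matrix.cons_val_zero, Matrix.cons_val_one, Matrix.head_cons, Matrix.cons_val_two, Matrix.tail_cons, Matrix.cons_val_three, Pi.sub_apply]
  ring
end

section
/- The two-point flux F̃₁ = (⟨h⟩⟨v₁⟩, ⟨h⟩⟨v₁⟩² + (g/2)⟨h²⟩ + g(⟨hb⟩ - ⟨h⟩⟨b⟩), ⟨h⟩⟨v₁⟩⟨v₂⟩, 0) satisfies (V_R - V_L)ᵀ F̃₁ = (ψ₁_R - ψ₁_L) - (g/2)((hv₁)_R - (hv₁)_L)(b_L + b_R), where ψ₁ = (1/2)gh²v₁ + ghv₁b and V = (g(h+b) - (v₁²+v₂²)/2, v₁, v₂, gh + 2γgb). -/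
open Matrix

/-- The two-point EC flux F̃₁ satisfies the EC condition
(V_R − V_L)ᵀ F̃₁ = ⟦ψ₁⟧ − (g/2)⟦hv₁⟧(b_L + b_R). -/
theorem EC_flux_x1 (g γ hL hR v₁L v₁R v₂L v₂R bL bR : ℝ)
    (hhL : 0 < hL) (hhR : 0 < hR) :
    let V : ℝ → ℝ → ℝ → ℝ → Fin 4 → ℝ := fun h v₁ v₂ b =>
      ![g * (h + b) - (v₁^2 + v₂^2) / 2, v₁, v₂, g * h + 2 * γ * g * b]
    let ψ₁ : ℝ → ℝ → ℝ → ℝ := fun h v₁ b => (1/2) * g * h^2 * v₁ + g * h * v₁ * b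
    let ah := (hL + hR) / 2
    let av₁ := (v₁L + v₁R) / 2
    let av₂ := (v₂L + v₂R) / 2
    let ab := (bL + bR) / 2
    let ah2 := (hL^2 + hR^2) / 2
    let ahb := (hL * bL + hR * bR) / 2
    let F₁ : Fin 4 → ℝ :=
      ![ah * av₁, ah * av₁^2 + g / 2 * ah2 + g * (ahb - ah * ab), ah * av₁ * av₂, 0]
    (V hR v₁R v₂R bR - V hL v₁L v₂L bL) ⬝ᵥ F₁
      = (ψ₁ hR v₁R bR - ψ₁ hL v₁L bL)
        - g / 2 * (hR * v₁R - hL * v₁L) * (bL + bR) := by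
  simp only [dotProduct, Fin.sum_univ_four, Pi.sub_apply, Matrix.cons_val_zero, Matrix.cons_val_one, Matrix.head_cons, Matrix.cons_val_two, Matrix.tail_cons, Matrix.cons_val_three]
  ring
end

section
/- The two-point flux F̃₂ = (⟨h⟩⟨v₂⟩, ⟨h⟩⟨v₁⟩⟨v₂⟩, ⟨h⟩⟨v₂⟩² + (g/2)⟨h²⟩ + g(⟨hb⟩ - ⟨h⟩⟨b⟩), 0) satisfies (V_R - V_L)ᵀ F̃₂ = (ψ₂_R - ψ₂_L) - (g/2)((hv₂)_R - (hv₂)_L)(b_L + b_R), where ψ₂ = (1/2)gh²v₂ + ghv₂b and V = (g(h+b) - (v₁²+v₂²)/2, v₁, v₂, gh + 2γgb). -/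
open Matrix

/-- The two-point EC flux F̃₂ satisfies the EC condition
(V_R − V_L)ᵀ F̃₂ = ⟦ψ₂⟧ − (g/2)⟦hv₂⟧(b_L + b_R). -/
theorem EC_flux_x2 (g γ hL hR v₁L v₁R v₂L v₂R bL bR : ℝ)
    (hhL : 0 < hL) (hhR : 0 < hR) :
    let V : ℝ → ℝ → ℝ → ℝ → Fin 4 → ℝ := fun h v₁ v₂ b =>
      ![g * (h + b) - (v₁^2 + v₂^2) / 2, v₁, v₂, g * h + 2 * γ * g * b]
    let ψ₂ : ℝ → ℝ → ℝ → ℝ := fun h v₂ b => (1/2) * g * h^2 * v₂ + g * h * v₂ * b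
    let ah := (hL + hR) / 2
    let av₁ := (v₁L + v₁R) / 2
    let av₂ := (v₂L + v₂R) / 2
    let ab := (bL + bR) / 2
    let ah2 := (hL^2 + hR^2) / 2
    let ahb := (hL * bL + hR * bR) / 2
    let F₂ : Fin 4 → ℝ :=
      ![ah * av₂, ah * av₁ * av₂, ah * av₂^2 + g / 2 * ah2 + g * (ahb - ah * ab), 0]
    (V hR v₁R v₂R bR - V hL v₁L v₂L bL) ⬝ᵥ F₂
      = (ψ₂ hR v₂R bR - ψ₂ hL v₂L bL)
        - g / 2 * (hR * v₂R - hL * v₂L) * (bL + bR) := by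
  simp only [dotProduct, Fin.sum_univ_four, Matrix.cons_val_zero,
    Matrix.cons_val_one, Matrix.head_cons, Matrix.cons_val_two, Matrix.tail_cons,
    Matrix.cons_val_three, Pi.sub_apply]
  ring
end

section
/- For the 1D shallow water system with flux Jacobian A = ∂F̂₁/∂Û of the original equations (Û = (h, hv₁, hv₂)), the scaled eigenvector matrix R = [[1,1,0],[v₁+c, v₁-c, 0],[v₂, v₂, 1]] · diag(1/√(2g), 1/√(2g), √h) with c = √(gh) satisfies A R = R Λ with Λ = diag(v₁+c, v₁-c, v₁), and R Rᵀ = ∂Û/∂V̂, where V̂ = (g(h+b) - (v₁²+v₂²)/2, v₁, v₂) are the entropy variables for fixed b. -/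
open Matrix ContinuousLinearMap

private lemma swJacobian (g h v₁ v₂ : ℝ) (hh : 0 < h) :
    (Matrix.of fun i j =>
      fderiv ℝ (fun u : Fin 3 → ℝ =>
        (![u 1, (u 1)^2 / u 0 + g / 2 * (u 0)^2, u 1 * u 2 / u 0] : Fin 3 → ℝ) i)
        ![h, h * v₁, h * v₂] (Pi.single j 1))
    = !![0, 1, 0; g * h - v₁^2, 2 * v₁, 0; -(v₁ * v₂), v₂, v₁] := by
  set p : Fin 3 → ℝ := ![h, h * v₁, h * v₂] with hp
  have hp0 : p 0 = h := rfl
  have hp1 : p 1 = h * v₁ := rfl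
  have hp2 : p 2 = h * v₂ := rfl
  have h0 : p 0 ≠ 0 := hh.ne'
  have d0 : HasFDerivAt (fun u : Fin 3 → ℝ => u 0) ((proj 0 : (Fin 3 → ℝ) →L[ℝ] ℝ)) p :=
    hasFDerivAt_apply (𝕜 := ℝ) (F' := fun _ : Fin 3 => ℝ) 0 p
  have d1 : HasFDerivAt (fun u : Fin 3 → ℝ => u 1) ((proj 1 : (Fin 3 → ℝ) →L[ℝ] ℝ)) p :=
    hasFDerivAt_apply (𝕜 := ℝ) (F' := fun _ : Fin 3 => ℝ) 1 p
  have d2 : HasFDerivAt (fun u : Fin 3 → ℝ => u 2) ((proj 2 : (Fin 3 → ℝ) →L[ℝ] ℝ)) p :=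
    hasFDerivAt_apply (𝕜 := ℝ) (F' := fun _ : Fin 3 => ℝ) 2 p
  have dinv : HasFDerivAt (fun u : Fin 3 → ℝ => (u 0)⁻¹)
      ((-(p 0 ^ 2)⁻¹ : ℝ) • (proj 0 : (Fin 3 → ℝ) →L[ℝ] ℝ)) p :=
    (hasDerivAt_inv h0).comp_hasFDerivAt p d0
  have drow1 := (((d1.mul d1).mul dinv).add ((d0.mul d0).const_mul (g/2)))
  have e1 : (fun u : Fin 3 → ℝ => (u 1)^2 / u 0 + g / 2 * (u 0)^2)
      = (fun u : Fin 3 → ℝ => (u 1 * u 1) * (u 0)⁻¹ + g / 2 * (u 0 * u 0)) := by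
    funext u; ring
  have hf1 := (drow1.congr_of_eventuallyEq (f₁ := fun u : Fin 3 → ℝ => (u 1)^2 / u 0 + g / 2 * (u 0)^2) (Filter.Eventually.of_forall fun u => by simp only [Pi.mul_apply, Pi.add_apply]; ring)).fderiv
  have drow2 := ((d1.mul d2).mul dinv)
  have e2 : (fun u : Fin 3 → ℝ => u 1 * u 2 / u 0)
      = (fun u : Fin 3 → ℝ => (u 1 * u 2) * (u 0)⁻¹) := by
    funext u; ring
  have hf2 := (drow2.congr_of_eventuallyEq (f₁ := fun u : Fin 3 → ℝ => u 1 * u 2 / u 0) (Filter.Eventually.of_forall fun u => by simp only [Pi.mul_apply]; ring)).fderiv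
  have hf0 := d1.fderiv
  ext i j
  fin_cases i
  · show fderiv ℝ (fun u : Fin 3 → ℝ => u 1) p (Pi.single j 1) = ![0, 1, 0] j
    rw [hf0]
    fin_cases j <;> simp [Pi.single_apply]
  · show fderiv ℝ (fun u : Fin 3 → ℝ => (u 1)^2 / u 0 + g / 2 * (u 0)^2) p (Pi.single j 1)
        = ![g * h - v₁^2, 2 * v₁, 0] j
    rw [hf1]
    fin_cases j <;> simp [hp0, hp1, Pi.single_apply] <;> field_simp <;> ring
  · show fderiv ℝ (fun u : Fin 3 → ℝ => u 1 * u 2 / u 0) p (Pi.single j 1)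
        = ![-(v₁ * v₂), v₂, v₁] j
    rw [hf2]
    fin_cases j <;> simp [hp0, hp1, hp2, Pi.single_apply] <;> field_simp <;> ring

set_option maxHeartbeats 4000000 in
private lemma swAlg (g h v₁ v₂ c S sh : ℝ) (hgne : g ≠ 0) (hSne : S ≠ 0)
    (hcsq : c ^ 2 = g * h) (hS2 : S ^ 2 = 2 * g) (hsh2 : sh ^ 2 = h) :
    ((!![0, 1, 0; g * h - v₁^2, 2 * v₁, 0; -(v₁ * v₂), v₂, v₁] : Matrix (Fin 3) (Fin 3) ℝ) *
      (!![1, 1, 0; v₁ + c, v₁ - c, 0; v₂, v₂, 1] * Matrix.diagonal ![1/S, 1/S, sh])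
      = (!![1, 1, 0; v₁ + c, v₁ - c, 0; v₂, v₂, 1] * Matrix.diagonal ![1/S, 1/S, sh]) *
        Matrix.diagonal ![v₁ + c, v₁ - c, v₁])
    ∧ (!![1, 1, 0; v₁ + c, v₁ - c, 0; v₂, v₂, 1] * Matrix.diagonal ![1/S, 1/S, sh]) *
        (!![1, 1, 0; v₁ + c, v₁ - c, 0; v₂, v₂, 1] * Matrix.diagonal ![1/S, 1/S, sh])ᵀ
      = (1 / g) • !![1, v₁, v₂; v₁, v₁^2 + g * h, v₁ * v₂; v₂, v₁ * v₂, v₂^2 + g * h] := by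
  have hR : (!![1, 1, 0; v₁ + c, v₁ - c, 0; v₂, v₂, 1] : Matrix (Fin 3) (Fin 3) ℝ)
      * Matrix.diagonal ![1/S, 1/S, sh]
      = !![1/S, 1/S, 0; (v₁+c)/S, (v₁-c)/S, 0; v₂/S, v₂/S, sh] := by
    ext i j
    rw [Matrix.mul_diagonal]
    fin_cases i <;> fin_cases j <;>
      simp [mul_one_div] <;> (try rw [div_eq_mul_inv])
  have hΛ : (Matrix.diagonal ![v₁ + c, v₁ - c, v₁] : Matrix (Fin 3) (Fin 3) ℝ)
      = !![v₁ + c, 0, 0; 0, v₁ - c, 0; 0, 0, v₁] := by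
    ext i j
    fin_cases i <;> fin_cases j <;>
      simp [Matrix.diagonal_apply, Matrix.vecHead, Matrix.vecTail, Function.comp]
  have hT : (!![1/S, 1/S, 0; (v₁+c)/S, (v₁-c)/S, 0; v₂/S, v₂/S, sh] : Matrix (Fin 3) (Fin 3) ℝ)ᵀ
      = !![1/S, (v₁+c)/S, v₂/S; 1/S, (v₁-c)/S, v₂/S; 0, 0, sh] := by
    ext i j; fin_cases i <;> fin_cases j <;> rfl
  rw [hR, hΛ, hT]
  constructor
  · rw [Matrix.mul_fin_three, Matrix.mul_fin_three]
    ext i j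
    fin_cases i <;> fin_cases j <;>
      simp only [Matrix.smul_apply, smul_eq_mul, Matrix.cons_val_zero, Matrix.cons_val_one,
        Matrix.head_cons, Matrix.head_fin_const, Matrix.cons_val', Matrix.empty_val',
        Matrix.cons_val_fin_one, Matrix.of_apply, Fin.zero_eta, Fin.mk_one, Fin.isValue,
        Matrix.cons_val, Fin.reduceFinMk] <;>
      field_simp <;> ring_nf <;> (try simp only [hcsq, hS2, hsh2]) <;> (try ring) <;>
      nlinarith [hcsq, hS2, hsh2]
  · rw [Matrix.mul_fin_three]
    ext i j
    fin_cases i <;> fin_cases j <;>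
      simp only [Matrix.smul_apply, smul_eq_mul, Matrix.cons_val_zero, Matrix.cons_val_one,
        Matrix.head_cons, Matrix.head_fin_const, Matrix.cons_val', Matrix.empty_val',
        Matrix.cons_val_fin_one, Matrix.of_apply, Fin.zero_eta, Fin.mk_one, Fin.isValue,
        Matrix.cons_val, Fin.reduceFinMk] <;>
      field_simp <;> ring_nf <;> (try simp only [hcsq, hS2, hsh2]) <;> (try ring) <;>
      nlinarith [hcsq, hS2, hsh2]

/-- The scaled eigenvector matrix R of the 1D shallow water flux Jacobian
satisfies A R = R Λ with Λ = diag(v₁+c, v₁−c, v₁), and R Rᵀ = ∂Û/∂V̂. -/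
theorem scaled_eigenvectors (g h v₁ v₂ b : ℝ) (hg : 0 < g) (hh : 0 < h) :
    let c := Real.sqrt (g * h)
    let Fhat : (Fin 3 → ℝ) → Fin 3 → ℝ := fun u =>
      ![u 1, (u 1)^2 / u 0 + g / 2 * (u 0)^2, u 1 * u 2 / u 0]
    -- flux Jacobian A = ∂F̂₁/∂Û evaluated at Û = (h, hv₁, hv₂)
    let A : Matrix (Fin 3) (Fin 3) ℝ := Matrix.of fun i j =>
      fderiv ℝ (fun u => Fhat u i) ![h, h * v₁, h * v₂] (Pi.single j 1)
    let R : Matrix (Fin 3) (Fin 3) ℝ :=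
      !![1, 1, 0; v₁ + c, v₁ - c, 0; v₂, v₂, 1] *
        Matrix.diagonal ![1 / Real.sqrt (2 * g), 1 / Real.sqrt (2 * g), Real.sqrt h]
    let Λ : Matrix (Fin 3) (Fin 3) ℝ := Matrix.diagonal ![v₁ + c, v₁ - c, v₁]
    -- ∂Û/∂V̂ : the inverse Jacobian of the change to the entropy variables
    let H : Matrix (Fin 3) (Fin 3) ℝ :=
      (1 / g) • !![1, v₁, v₂; v₁, v₁^2 + g * h, v₁ * v₂; v₂, v₁ * v₂, v₂^2 + g * h]
    A * R = R * Λ ∧ R * Rᵀ = H := by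
  intro c Fhat A R Λ H
  have hA : A = !![0, 1, 0; g * h - v₁^2, 2 * v₁, 0; -(v₁ * v₂), v₂, v₁] :=
    swJacobian g h v₁ v₂ hh
  have hgne : g ≠ 0 := hg.ne'
  have hSne : Real.sqrt (2 * g) ≠ 0 := by positivity
  have hcsq : c ^ 2 = g * h := Real.sq_sqrt (by positivity)
  have hS2 : Real.sqrt (2 * g) ^ 2 = 2 * g := Real.sq_sqrt (by positivity)
  have hsh2 : Real.sqrt h ^ 2 = h := Real.sq_sqrt hh.le
  rw [hA]
  exact swAlg g h v₁ v₂ c (Real.sqrt (2 * g)) (Real.sqrt h) hgne hSne hcsq hS2 hsh2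
end
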